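/- Let F be a field and let k < n+1 be natural numbers. Let A be a (k+1)×(n+1) matrix over F with linearly independent rows and B an (n−k)×(n+1) matrix over F with linearly independent rows, such that A·Bᵀ = 0 (so the row space of B is the annihilator of the row space of A under the standard bilinear pairing). Then there exists a nonzero λ ∈ F such that for every strictly increasing (k+1)-tuple i = (i_0,…,i_k) of indices in {0,…,n}, with complementary strictly increasing (n−k)-tuple i' = (i_{k+1},…,i_n), det(A restricted to columns i) = λ·ε_i·det(B restricted to columns i'), where ε_i = +1 if the concatenated sequence (i_0,…,i_k,i_{k+1},…,i_n) is an even permutation of (0,…,n) and ε_i = −1 if it is odd. -/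

import Mathlib

open Matrix Submodule Module

lemma pluecker_key {F : Type*} [Field F] {p q m : ℕ}
    (A : Matrix (Fin p) (Fin m) F) (B : Matrix (Fin q) (Fin m) F)
    (e : (Fin p ⊕ Fin q) ≃ Fin m)
    (hA : LinearIndependent F (fun r : Fin p => A r))
    (hB : LinearIndependent F (fun r : Fin q => B r))
    (hAB : A * Bᵀ = 0) :
    ∃ c : F, c ≠ 0 ∧ ∀ Y : Matrix (Fin q) (Fin m) F,
      ((Matrix.fromRows A Y).submatrix id e).det = c * (Y * Bᵀ).det := by
  have hm : p + q = m := by simpa using Fintype.card_congr e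
  have hBA : ∀ r, B.mulVec (A r) = 0 := by
    intro r
    ext t
    have h := congrFun (congrFun hAB r) t
    simp only [Matrix.mul_apply, Matrix.transpose_apply, Matrix.zero_apply] at h
    simpa [Matrix.mulVec, dotProduct, mul_comm] using h
  -- surjectivity of B.mulVecLin
  have hrange : LinearMap.range B.mulVecLin = ⊤ := by
    have h1 : B.rank = q := by
      rw [← Matrix.rank_transpose, Matrix.rank, Matrix.range_mulVecLin,
        Matrix.col_transpose]
      exact (finrank_span_eq_card hB).trans (by simp)
    apply Submodule.eq_top_of_finrank_eq
    rw [Module.finrank_pi]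
    simpa [Matrix.rank] using h1
  obtain ⟨g, hg⟩ := B.mulVecLin.exists_rightInverse_of_surjective hrange
  set C : Matrix (Fin m) (Fin q) F := LinearMap.toMatrix' g with hC
  have hBC : B * C = 1 := by
    apply Matrix.toLin'.injective
    rw [Matrix.toLin'_apply', Matrix.mulVecLin_mul, ← Matrix.toLin'_apply' C, hC,
      Matrix.toLin'_toMatrix', Matrix.toLin'_apply', Matrix.mulVecLin_one]
    exact hg
  -- kernel of B.mulVecLin is the row span of A
  have hker : Submodule.span F (Set.range fun r : Fin p => A r) = LinearMap.ker B.mulVecLin := by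
    have hle : Submodule.span F (Set.range fun r : Fin p => A r) ≤ LinearMap.ker B.mulVecLin := by
      rw [Submodule.span_le]
      rintro x ⟨r, rfl⟩
      exact LinearMap.mem_ker.2 (hBA r)
    refine Submodule.eq_of_le_of_finrank_le hle ?_
    have h3 := LinearMap.finrank_range_add_finrank_ker B.mulVecLin
    rw [hrange, finrank_top, Module.finrank_pi, Module.finrank_pi] at h3
    have h4 : finrank F (Submodule.span F (Set.range fun r : Fin p => A r)) = p := by
      simpa using finrank_span_eq_card hA
    simp only [Fintype.card_fin] at h3
    omega
  -- the scalar
  set c : F := ((Matrix.fromRows A Cᵀ).submatrix id e).det with hc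
  -- columns of C behave like a section
  have hCinj : ∀ β : Fin q → F, C.mulVec β = 0 → β = 0 := by
    intro β h
    have h2 := congrArg B.mulVec h
    rwa [Matrix.mulVec_mulVec, hBC, Matrix.one_mulVec, Matrix.mulVec_zero] at h2
  have hCt : LinearIndependent F (fun b : Fin q => Cᵀ b) := by
    rw [Fintype.linearIndependent_iff]
    intro β h
    have : C.mulVec β = 0 := by
      ext u
      have := congrFun h u
      simpa [Matrix.mulVec, dotProduct, mul_comm] using this
    intro b
    exact congrFun (hCinj β this) b
  have hdisj : Disjoint (Submodule.span F (Set.range fun r : Fin p => A r))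
      (Submodule.span F (Set.range fun b : Fin q => Cᵀ b)) := by
    rw [Submodule.disjoint_def]
    intro w hw1 hw2
    obtain ⟨β, hβ⟩ := (mem_span_range_iff_exists_fun F).mp hw2
    have hwC : C.mulVec β = w := by
      ext u
      have := congrFun hβ u
      simpa [Matrix.mulVec, dotProduct, mul_comm] using this
    have hBw : B.mulVec w = 0 := by
      rw [hker] at hw1
      exact LinearMap.mem_ker.1 hw1
    have hβ0 : β = B.mulVec w := by
      rw [← hwC, Matrix.mulVec_mulVec, hBC, Matrix.one_mulVec]
    rw [← hwC, hβ0, hBw, Matrix.mulVec_zero]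
  have hrows : LinearIndependent F (fun r : Fin p ⊕ Fin q => (Matrix.fromRows A Cᵀ) r) := by
    exact hA.sum_type hCt hdisj
  have hc0 : c ≠ 0 := by
    have hrows2 : LinearIndependent F
        (fun r : Fin p ⊕ Fin q => ((Matrix.fromRows A Cᵀ).submatrix id e) r) := by
      have hmap : ∀ r : Fin p ⊕ Fin q, ((Matrix.fromRows A Cᵀ).submatrix id e) r
          = (LinearMap.funLeft F F e) ((Matrix.fromRows A Cᵀ) r) := fun r => rfl
      simp only [hmap]
      exact hrows.map' (LinearMap.funLeft F F e)
        (LinearMap.ker_eq_bot.2 (LinearMap.funLeft_injective_of_surjective F F e e.surjective))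
    have := Matrix.linearIndependent_rows_iff_isUnit.mp hrows2
    exact (Matrix.isUnit_iff_isUnit_det _ |>.mp this).ne_zero
  refine ⟨c, hc0, ?_⟩
  intro Y
  set W : Matrix (Fin q) (Fin q) F := Y * Bᵀ with hW
  set Y' : Matrix (Fin q) (Fin m) F := Y - W * Cᵀ with hY'
  have hY'B : Y' * Bᵀ = 0 := by
    have hCtBt : Cᵀ * Bᵀ = 1 := by
      rw [← Matrix.transpose_mul, hBC, Matrix.transpose_one]
    rw [hY', Matrix.sub_mul, Matrix.mul_assoc, hCtBt, Matrix.mul_one, hW, sub_self]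
  have hrowY' : ∀ s : Fin q, ∃ d : Fin p → F, ∑ a, d a • A a = Y' s := by
    intro s
    rw [← mem_span_range_iff_exists_fun F (v := fun r : Fin p => A r), hker]
    apply LinearMap.mem_ker.2
    rw [Matrix.mulVecLin_apply]
    ext t
    have := congrFun (congrFun hY'B s) t
    simp only [Matrix.mul_apply, Matrix.transpose_apply, Matrix.zero_apply] at this
    simpa [Matrix.mulVec, dotProduct, mul_comm] using this
  choose D hD using hrowY'
  have hfact : Matrix.fromRows A Y =
      Matrix.fromBlocks (1 : Matrix (Fin p) (Fin p) F) 0 (Matrix.of D) W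
        * Matrix.fromRows A Cᵀ := by
    ext r u
    cases r with
    | inl r =>
      rw [Matrix.mul_apply, Fintype.sum_sum_type]
      simp [Matrix.one_apply, Finset.sum_ite_eq]
    | inr r =>
      rw [Matrix.mul_apply, Fintype.sum_sum_type]
      simp only [Matrix.fromBlocks_apply₂₁, Matrix.fromBlocks_apply₂₂,
        Matrix.fromRows_apply_inl, Matrix.fromRows_apply_inr, Matrix.of_apply,
        Matrix.transpose_apply]
      have h1 : ∑ a, D r a * A a u = Y' r u := by
        have := congrFun (hD r) u
        simpa [Finset.sum_apply] using this
      have h2 : ∑ b, W r b * C u b = (W * Cᵀ) r u := by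
        simp [Matrix.mul_apply]
      rw [h1, h2, hY']
      simp
  rw [hfact]
  have hsub : ((Matrix.fromBlocks (1 : Matrix (Fin p) (Fin p) F) 0 (Matrix.of D) W
        * Matrix.fromRows A Cᵀ).submatrix id e)
      = Matrix.fromBlocks (1 : Matrix (Fin p) (Fin p) F) 0 (Matrix.of D) W
        * ((Matrix.fromRows A Cᵀ).submatrix id e) := by
    ext r s
    simp [Matrix.mul_apply]
  rw [hsub, Matrix.det_mul, Matrix.det_fromBlocks_zero₁₂, Matrix.det_one, one_mul, mul_comm]



/-- Up to a global nonzero scalar and a sign given by the permutation concatenating the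
column indices with their complement, the primary Plücker coordinates (maximal minors of a
matrix `A` whose rows span a subspace) equal the dual Plücker coordinates (complementary
maximal minors of a matrix `B` whose rows cut out the same subspace). -/
theorem primary_dual_pluecker_relation {F : Type*} [Field F]
    (k n : ℕ) (hkn : k < n + 1)
    (A : Matrix (Fin (k + 1)) (Fin (n + 1)) F)
    (B : Matrix (Fin (n - k)) (Fin (n + 1)) F)
    (hA : LinearIndependent F (fun r : Fin (k + 1) => A r))
    (hB : LinearIndependent F (fun r : Fin (n - k) => B r))
    (hAB : A * B.transpose = 0) :
    ∃ l : F, l ≠ 0 ∧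
      ∀ (i : Fin (k + 1) → Fin (n + 1)) (j : Fin (n - k) → Fin (n + 1))
        (σ : Equiv.Perm (Fin (n + 1))),
        StrictMono i → StrictMono j →
        (∀ s : Fin (k + 1),
          σ (finCongr (show k + 1 + (n - k) = n + 1 by omega) (finSumFinEquiv (Sum.inl s)))
            = i s) →
        (∀ s : Fin (n - k),
          σ (finCongr (show k + 1 + (n - k) = n + 1 by omega) (finSumFinEquiv (Sum.inr s)))
            = j s) →
        (A.submatrix id i).det =
          l * ((Equiv.Perm.sign σ : ℤ) : F) * (B.submatrix id j).det := by
  classical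
  have h : k + 1 + (n - k) = n + 1 := by omega
  set e : (Fin (k + 1) ⊕ Fin (n - k)) ≃ Fin (n + 1) := finSumFinEquiv.trans (finCongr h)
    with he
  obtain ⟨c, hc0, hkey⟩ := pluecker_key A B e hA hB hAB
  refine ⟨c, hc0, ?_⟩
  intro i j σ hi hj hσi hσj
  set Y : Matrix (Fin (n - k)) (Fin (n + 1)) F :=
    Matrix.of fun s t => if t = j s then (1 : F) else 0 with hY
  have hei : ∀ s, σ (e (Sum.inl s)) = i s := fun s => hσi s
  have hej : ∀ s, σ (e (Sum.inr s)) = j s := fun s => hσj s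
  set π : Equiv.Perm (Fin (k + 1) ⊕ Fin (n - k)) := (Equiv.permCongr e.symm) σ with hπ
  have hπs : ∀ x, e (π x) = σ (e x) := fun x => by
    simp [hπ, Equiv.permCongr_apply]
  have hij : ∀ s r, i s ≠ j r := by
    intro s r hh
    have : σ (e (Sum.inl s)) = σ (e (Sum.inr r)) := by rw [hei, hej, hh]
    exact absurd (e.injective (σ.injective this)) (by simp)
  have h1 : ((Matrix.fromRows A Y).submatrix id e).submatrix id π
      = Matrix.fromBlocks (A.submatrix id i) (A.submatrix id j) 0
          (1 : Matrix (Fin (n - k)) (Fin (n - k)) F) := by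
    ext r s
    cases r with
    | inl r =>
      cases s with
      | inl s => simp [hπs, hei]
      | inr s => simp [hπs, hej]
    | inr r =>
      cases s with
      | inl s => simp [hπs, hei, hY, hij s r]
      | inr s => simp [hπs, hej, hY, Matrix.one_apply, hj.injective.eq_iff, eq_comm]
  have h2 := Matrix.det_permute' π ((Matrix.fromRows A Y).submatrix id e)
  rw [h1, Matrix.det_fromBlocks_zero₂₁, Matrix.det_one, mul_one] at h2
  have h4 : Y * Bᵀ = (B.submatrix id j)ᵀ := by
    ext s t
    simp [hY, Matrix.mul_apply]
  have hsign : Equiv.Perm.sign π = Equiv.Perm.sign σ := Equiv.Perm.sign_permCongr e.symm σ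
  rw [h2, hkey Y, h4, Matrix.det_transpose, hsign]
  ring
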